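/- Let n, m ≥ 1, let π ∈ J_{2n,2m}, set I = I_{2n+2m} and α = I∘π. Then the even numbers appear in increasing cyclic order in the cycles of α, in the following sense: for each j ∈ {1,…,n}, if t ≥ 1 is minimal with α^t(2j) even, then α^t(2j) = 2j+2 when j < n and α^t(2j) = 2 when j = n; and for each j ∈ {n+1,…,n+m}, if t ≥ 1 is minimal with α^t(2j) even, then α^t(2j) = 2j+2 when j < n+m and α^t(2j) = 2n+2 when j = n+m. -/

import Mathlib

noncomputable def cycleCount {N : ℕ} (π : Equiv.Perm (Fin N)) : ℕ :=
  Set.ncard {O : Set (Fin N) | ∃ x, O = {y | π.SameCycle x y}}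

noncomputable def cyclesIn {N : ℕ} (π : Equiv.Perm (Fin N)) (C : Set (Fin N)) : ℕ :=
  Set.ncard {O : Set (Fin N) | (∃ x, O = {y | π.SameCycle x y}) ∧ O ⊆ C}

/-- The annular permutation `γ_{p,q}` of `{1,…,p+q}` (0-indexed as `Fin (p+q)`),
with the two cycles `(1,…,p)` and `(p+1,…,p+q)`. -/
def annularGamma (p q : ℕ) : Equiv.Perm (Fin (p + q)) :=
  finSumFinEquiv.permCongr ((finRotate p).sumCongr (finRotate q))

/-- The interval involution `I_N = (1 2)(3 4)⋯(N-1 N)` of `{1,…,N}`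
(0-indexed: swaps `2i ↔ 2i+1`), for `N` even. -/
def intervalInvolution (N : ℕ) : Equiv.Perm (Fin N) :=
  Function.Involutive.toPerm
    (fun x => ⟨if x.val % 2 = 0 then min (x.val + 1) (N - 1) else x.val - 1, by
      rcases x with ⟨v, hv⟩
      dsimp only
      split <;> omega⟩)
    (by
      intro x
      rcases x with ⟨v, hv⟩
      apply Fin.ext
      dsimp only
      split_ifs <;> omega)

/-- The subgroup generated by `π` and `ρ` acts transitively on `Fin N`. -/
def JointTrans {N : ℕ} (π ρ : Equiv.Perm (Fin N)) : Prop :=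
  ∀ x y : Fin N, ∃ g ∈ Subgroup.closure ({π, ρ} : Set (Equiv.Perm (Fin N))), g x = y

/-- `α` separates even numbers: no cycle of `α` contains two distinct even numbers
(an element `x : Fin N` represents the number `x.val + 1`). -/
def SeparatesEven {N : ℕ} (α : Equiv.Perm (Fin N)) : Prop :=
  ∀ x y : Fin N, α.SameCycle x y → (x.val + 1) % 2 = 0 → (y.val + 1) % 2 = 0 → x = y

/-- `π ∈ S_NC(p,q)`: annular non-crossing permutations. -/
def AnnularNC (p q : ℕ) (π : Equiv.Perm (Fin (p + q))) : Prop :=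
  JointTrans π (annularGamma p q) ∧
    cycleCount π + cycleCount (π⁻¹ * annularGamma p q) = p + q

/-- `A` witnesses bipartiteness of the graph `G_π`: `π(A) = A` and for each `i`,
exactly one of the (1-indexed) numbers `2i-1`, `2i` belongs to `A`. -/
def BipartSet {N : ℕ} (π : Equiv.Perm (Fin N)) (A : Set (Fin N)) : Prop :=
  (⇑π) '' A = A ∧ ∀ i : ℕ, ∀ h : 2 * i + 1 < N,
    Xor' ((⟨2 * i, Nat.lt_of_succ_lt h⟩ : Fin N) ∈ A) ((⟨2 * i + 1, h⟩ : Fin N) ∈ A)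

/-- The graph `G_π` is bipartite. -/
def GraphBipartite {N : ℕ} (π : Equiv.Perm (Fin N)) : Prop :=
  ∃ A : Set (Fin N), BipartSet π A

/-- `π ∈ J_{2n,2m}`: annular non-crossing, bipartite graph, and `π⁻¹γ` separates even. -/
def memJ (n m : ℕ) (π : Equiv.Perm (Fin (2 * n + 2 * m))) : Prop :=
  AnnularNC (2 * n) (2 * m) π ∧ GraphBipartite π ∧
    SeparatesEven (π⁻¹ * annularGamma (2 * n) (2 * m))

-- AUX
theorem finRotate_val' (p : ℕ) (hp : 0 < p) (i : Fin p) :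
    (finRotate p i).val = (i.val + 1) % p := by
  obtain ⟨p, rfl⟩ : ∃ p', p = p' + 1 := ⟨p - 1, by omega⟩
  rw [finRotate_succ_apply, Fin.add_def]
  simp

theorem gamma_val₁ (p q : ℕ) (hp : 0 < p) (x : Fin (p+q)) (h : x.val < p) :
    ((annularGamma p q) x).val = (x.val + 1) % p := by
  have hs : finSumFinEquiv.symm x = Sum.inl ⟨x.val, h⟩ := by
    have hx : x = Fin.castAdd q ⟨x.val, h⟩ := by ext; simp
    conv_lhs => rw [hx]
    exact finSumFinEquiv_symm_apply_castAdd _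
  simp [annularGamma, Equiv.permCongr_apply, hs, finRotate_val' p hp, -finRotate_apply]

theorem gamma_val₂ (p q : ℕ) (hq : 0 < q) (x : Fin (p+q)) (h : ¬ x.val < p) :
    ((annularGamma p q) x).val = p + ((x.val - p + 1) % q) := by
  have hs : finSumFinEquiv.symm x = Sum.inr ⟨x.val - p, by omega⟩ := by
    have hx : x = Fin.natAdd p ⟨x.val - p, by omega⟩ := by ext; simp; omega
    conv_lhs => rw [hx]
    exact finSumFinEquiv_symm_apply_natAdd _
  simp [annularGamma, Equiv.permCongr_apply, hs, finRotate_val' q hq, -finRotate_apply]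

theorem interval_val (N : ℕ) (hN : N % 2 = 0) (x : Fin N) :
    ((intervalInvolution N) x).val =
      if x.val % 2 = 0 then x.val + 1 else x.val - 1 := by
  have hx := x.isLt
  simp only [intervalInvolution, Function.Involutive.coe_toPerm, Function.Involutive.toPerm, Equiv.coe_fn_mk]
  split <;> omega

/-- value of `E = I * γ` -/
theorem E_val (n m : ℕ) (hn : 1 ≤ n) (hm : 1 ≤ m) (x : Fin (2*n + 2*m)) :
    ((intervalInvolution (2*n+2*m) * annularGamma (2*n) (2*m)) x).val =
      if x.val % 2 = 0 then x.val
      else if x.val + 1 = 2*n then 1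
      else if x.val + 1 = 2*n + 2*m then 2*n + 1
      else x.val + 2 := by
  have hx := x.isLt
  have hN : (2*n + 2*m) % 2 = 0 := by omega
  rw [Equiv.Perm.mul_apply, interval_val _ hN]
  by_cases h : x.val < 2*n
  · by_cases h2 : x.val + 1 = 2*n
    · have hg : ((annularGamma (2*n) (2*m)) x).val = 0 := by
        rw [gamma_val₁ _ _ (by omega) _ h, h2, Nat.mod_self]
      rw [hg]; split_ifs <;> omega
    · have hg : ((annularGamma (2*n) (2*m)) x).val = x.val + 1 := by
        rw [gamma_val₁ _ _ (by omega) _ h, Nat.mod_eq_of_lt (by omega)]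
      rw [hg]; split_ifs <;> omega
  · by_cases h2 : x.val + 1 = 2*n + 2*m
    · have hg : ((annularGamma (2*n) (2*m)) x).val = 2*n := by
        rw [gamma_val₂ _ _ (by omega) _ h]
        have : x.val - 2*n + 1 = 2*m := by omega
        rw [this, Nat.mod_self]
        omega
      rw [hg]; split_ifs <;> omega
    · have hg : ((annularGamma (2*n) (2*m)) x).val = 2*n + (x.val - 2*n + 1) := by
        rw [gamma_val₂ _ _ (by omega) _ h, Nat.mod_eq_of_lt (by omega)]
      rw [hg]; split_ifs <;> omega

theorem E_parity (n m : ℕ) (hn : 1 ≤ n) (hm : 1 ≤ m) (x : Fin (2*n + 2*m)) :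
    ((intervalInvolution (2*n+2*m) * annularGamma (2*n) (2*m)) x).val % 2 = x.val % 2 := by
  rw [E_val n m hn hm]; split_ifs <;> omega

theorem E_fix (n m : ℕ) (hn : 1 ≤ n) (hm : 1 ≤ m) (x : Fin (2*n + 2*m))
    (hx : x.val % 2 = 0) :
    (intervalInvolution (2*n+2*m) * annularGamma (2*n) (2*m)) x = x := by
  apply Fin.ext
  rw [E_val n m hn hm, if_pos hx]

theorem key (n m : ℕ) (hn : 1 ≤ n) (hm : 1 ≤ m) (π : Equiv.Perm (Fin (2*n + 2*m)))
    (hsep : SeparatesEven (π⁻¹ * annularGamma (2*n) (2*m)))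
    (x₀ : Fin (2*n + 2*m)) (hx₀ : x₀.val % 2 = 1) (t : ℕ) (ht : 1 ≤ t)
    (heven : ((((intervalInvolution (2*n+2*m) * π) ^ t) x₀).val + 1) % 2 = 0)
    (hodd : ∀ u : ℕ, 1 ≤ u → u < t →
      ¬ (((((intervalInvolution (2*n+2*m) * π) ^ u) x₀).val + 1) % 2 = 0)) :
    ((intervalInvolution (2*n+2*m) * π) ^ t) x₀ =
      (intervalInvolution (2*n+2*m) * annularGamma (2*n) (2*m)) x₀ := by
  set γ := annularGamma (2*n) (2*m)
  set I := intervalInvolution (2*n+2*m)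
  set α := I * π with hα
  set β := π⁻¹ * γ with hβ
  set E := I * γ with hE
  have hαβ : ∀ z, α z = E (β⁻¹ z) := by
    intro z
    have h1 : E * β⁻¹ = α := by rw [hα, hβ, hE]; group
    rw [← h1, Equiv.Perm.mul_apply]
  -- step lemma
  have step : ∀ s : ℕ, s < t → (α ^ s) x₀ = (β⁻¹ ^ s) x₀ := by
    intro s
    induction s with
    | zero => intro _; simp
    | succ s ih =>
      intro hs
      have hodds : ((α ^ (s+1)) x₀).val % 2 = 0 := by
        have := hodd (s+1) (by omega) hs
        omega
      have h1 : (α ^ (s+1)) x₀ = E ((β⁻¹ ^ (s+1)) x₀) := by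
        rw [pow_succ', Equiv.Perm.mul_apply, ih (by omega), hαβ,
          pow_succ' β⁻¹ s, Equiv.Perm.mul_apply]
        rfl
      have h2 : ((β⁻¹ ^ (s+1)) x₀).val % 2 = 0 := by
        have := E_parity n m hn hm ((β⁻¹ ^ (s+1)) x₀)
        rw [← hE] at this
        rw [h1] at hodds
        omega
      rw [h1, E_fix n m hn hm _ h2]
  have h1 : (α ^ t) x₀ = E ((β⁻¹ ^ t) x₀) := by
    obtain ⟨s, rfl⟩ : ∃ s, t = s + 1 := ⟨t - 1, by omega⟩
    rw [pow_succ', Equiv.Perm.mul_apply, step s (by omega), hαβ,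
      pow_succ' β⁻¹ s, Equiv.Perm.mul_apply]
    rfl
  have h2 : ((β⁻¹ ^ t) x₀).val % 2 = 1 := by
    have := E_parity n m hn hm ((β⁻¹ ^ t) x₀)
    rw [← hE] at this
    rw [h1] at heven
    omega
  have hsc : β.SameCycle x₀ ((β⁻¹ ^ t) x₀) := by
    refine ⟨-(t : ℤ), ?_⟩
    rw [zpow_neg, zpow_natCast, ← inv_pow]
  have hx : (β⁻¹ ^ t) x₀ = x₀ :=
    (hsep x₀ ((β⁻¹ ^ t) x₀) hsc (by omega) (by omega)).symm
  rw [h1, hx]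


theorem stmt_9 (n m : ℕ) (hn : 1 ≤ n) (hm : 1 ≤ m)
    (π : Equiv.Perm (Fin (2 * n + 2 * m))) (hπ : memJ n m π) :
    (∀ j : ℕ, (hj1 : 1 ≤ j) → (hj2 : j ≤ n) → ∀ t : ℕ, 1 ≤ t →
      ((((intervalInvolution (2 * n + 2 * m) * π) ^ t)
          (⟨2 * j - 1, by omega⟩ : Fin (2 * n + 2 * m))).val + 1) % 2 = 0 →
      (∀ u : ℕ, 1 ≤ u → u < t →
        ¬ (((((intervalInvolution (2 * n + 2 * m) * π) ^ u)
            (⟨2 * j - 1, by omega⟩ : Fin (2 * n + 2 * m))).val + 1) % 2 = 0)) →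
      ((((intervalInvolution (2 * n + 2 * m) * π) ^ t)
          (⟨2 * j - 1, by omega⟩ : Fin (2 * n + 2 * m))).val
        = if j < n then 2 * j + 1 else 1)) ∧
    (∀ j : ℕ, (hj1 : n + 1 ≤ j) → (hj2 : j ≤ n + m) → ∀ t : ℕ, 1 ≤ t →
      ((((intervalInvolution (2 * n + 2 * m) * π) ^ t)
          (⟨2 * j - 1, by omega⟩ : Fin (2 * n + 2 * m))).val + 1) % 2 = 0 →
      (∀ u : ℕ, 1 ≤ u → u < t →
        ¬ (((((intervalInvolution (2 * n + 2 * m) * π) ^ u)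
            (⟨2 * j - 1, by omega⟩ : Fin (2 * n + 2 * m))).val + 1) % 2 = 0)) →
      ((((intervalInvolution (2 * n + 2 * m) * π) ^ t)
          (⟨2 * j - 1, by omega⟩ : Fin (2 * n + 2 * m))).val
        = if j < n + m then 2 * j + 1 else 2 * n + 1)) := by
  obtain ⟨_, _, hsep⟩ := hπ
  constructor
  · intro j hj1 hj2 t ht heven hodd
    rw [key n m hn hm π hsep ⟨2*j-1, by omega⟩ (by simp; omega) t ht heven hodd,
      E_val n m hn hm]
    simp only
    split_ifs <;> omega
  · intro j hj1 hj2 t ht heven hodd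
    rw [key n m hn hm π hsep ⟨2*j-1, by omega⟩ (by simp; omega) t ht heven hodd,
      E_val n m hn hm]
    simp only
    split_ifs <;> omega
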